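/- Any level-2 phylogenetic network with n leaves has at most 8n arcs. -/

import Mathlib

namespace Phylo

variable {V : Type*}

/-- In-degree of a vertex in a directed graph given by relation `R`. -/
noncomputable def inDeg (R : V → V → Prop) (v : V) : ℕ := {u | R u v}.ncard

/-- Out-degree of a vertex. -/
noncomputable def outDeg (R : V → V → Prop) (v : V) : ℕ := {w | R v w}.ncard

/-- A phylogenetic network: an acyclic digraph with a unique root of indegree 0 and
outdegree 2, in which every vertex is the root, a split vertex (indeg 1, outdeg 2),
a recombination vertex (indeg 2, outdeg 1) or a leaf (indeg 1, outdeg 0). -/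
def IsPhyloNet (R : V → V → Prop) : Prop :=
  (∀ v, ¬ Relation.TransGen R v v) ∧
  (∃! r, inDeg R r = 0) ∧
  (∀ v : V, (inDeg R v = 0 ∧ outDeg R v = 2) ∨ (inDeg R v = 1 ∧ outDeg R v = 2) ∨
    (inDeg R v = 2 ∧ outDeg R v = 1) ∨ (inDeg R v = 1 ∧ outDeg R v = 0))

/-- A leaf is a vertex of outdegree 0. -/
def IsLf (R : V → V → Prop) (v : V) : Prop := outDeg R v = 0

/-- The set of leaves of a network. -/
def netLeaves (R : V → V → Prop) : Set V := {v | IsLf R v}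

/-- `p` is a directed path (as a nonempty list of vertices) from `a` to `b`. -/
def IsPth (R : V → V → Prop) (p : List V) (a b : V) : Prop :=
  p ≠ [] ∧ p.head? = some a ∧ p.getLast? = some b ∧ p.Chain' R

/-- Internal vertices of a path. -/
def interior (p : List V) : List V := p.tail.dropLast

/-- Two paths are internally vertex-disjoint. -/
def IntDisj (p q : List V) : Prop :=
  (∀ v ∈ interior p, v ∉ q) ∧ (∀ v ∈ interior q, v ∉ p)

/-- The triplet xy|z is consistent with the network `R`: there are `u ≠ v` and pairwise
internally vertex-disjoint paths `u→x`, `u→y`, `v→u`, `v→z`. -/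
def ConsistentTrip (R : V → V → Prop) (x y z : V) : Prop :=
  ∃ u v : V, ∃ p1 p2 p3 p4 : List V, u ≠ v ∧
    IsPth R p1 u x ∧ IsPth R p2 u y ∧ IsPth R p3 v u ∧ IsPth R p4 v z ∧
    IntDisj p1 p2 ∧ IntDisj p1 p3 ∧ IntDisj p1 p4 ∧
    IntDisj p2 p3 ∧ IntDisj p2 p4 ∧ IntDisj p3 p4

/-- `(x,y,z) ∈ T` codes the rooted triplet xy|z; `trip T x y z` says xy|z ∈ T
(taking into account the symmetry xy|z = yx|z). -/
def trip (T : Set (V × V × V)) (x y z : V) : Prop := (x, y, z) ∈ T ∨ (y, x, z) ∈ T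

/-- The leaf set L(T) of a triplet set. -/
def tripLeaves (T : Set (V × V × V)) : Set V :=
  {a | ∃ t ∈ T, a = t.1 ∨ a = t.2.1 ∨ a = t.2.2}

/-- `T` is dense: every 3-element subset of L(T) supports at least one triplet of `T`. -/
def DenseT (T : Set (V × V × V)) : Prop :=
  ∀ x y z, x ∈ tripLeaves T → y ∈ tripLeaves T → z ∈ tripLeaves T →
    x ≠ y → x ≠ z → y ≠ z → trip T x y z ∨ trip T x z y ∨ trip T y z x

/-- An SN-set of `T`: a subset of L(T) closed under the operation
`S_T(X) = X ∪ {c | ∃ x y ∈ X, xc|y ∈ T}`. -/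
def IsSNSet (T : Set (V × V × V)) (Y : Set V) : Prop :=
  Y ⊆ tripLeaves T ∧
    ∀ ⦃c x y : V⦄, x ∈ Y → y ∈ Y → c ∈ tripLeaves T → trip T x c y → c ∈ Y

/-- `SN T X`: the closure of `X` under `S_T`, i.e. the smallest SN-superset of `X`. -/
def SN (T : Set (V × V × V)) (X : Set V) : Set V := ⋂₀ {Y | X ⊆ Y ∧ IsSNSet T Y}

/-- A maximal SN-set: a proper SN-set such that the only SN-set strictly containing
it is L(T) itself. -/
def MaxSN (T : Set (V × V × V)) (S : Set V) : Prop :=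
  IsSNSet T S ∧ S ≠ tripLeaves T ∧ ∀ Y, IsSNSet T Y → S ⊂ Y → Y = tripLeaves T

/-- A network is consistent with a triplet set if it is consistent with every triplet. -/
def ConsistentSet (R : V → V → Prop) (T : Set (V × V × V)) : Prop :=
  ∀ t ∈ T, ConsistentTrip R t.1 t.2.1 t.2.2

/-- A cut-arc: an arc whose removal disconnects the underlying undirected graph. -/
def CutArc (R : V → V → Prop) (u v : V) : Prop :=
  R u v ∧ ∃ a b : V, ¬ Relation.ReflTransGen
    (fun p q => (R p q ∨ R q p) ∧ ¬((p = u ∧ q = v) ∨ (p = v ∧ q = u))) a b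

/-- The set of leaves below the arc `(u,v)`: leaves reachable from `v`. -/
def leavesBelow (R : V → V → Prop) (u v : V) : Set V :=
  {ℓ | IsLf R ℓ ∧ Relation.ReflTransGen R v ℓ}

/-- A highest cut-arc: a cut-arc `(u,v)` such that there is no cut-arc `(u',v')`
with `u` reachable from `v'`. -/
def HighestCutArc (R : V → V → Prop) (u v : V) : Prop :=
  CutArc R u v ∧ ∀ u' v', CutArc R u' v' → ¬ Relation.ReflTransGen R v' u

/-- The subset `S` is connected in the underlying undirected graph. -/
def ConnOn (R : V → V → Prop) (S : Set V) : Prop :=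
  ∀ a ∈ S, ∀ b ∈ S,
    Relation.ReflTransGen (fun p q => p ∈ S ∧ q ∈ S ∧ (R p q ∨ R q p)) a b

/-- `S` induces a biconnected subgraph containing at least one arc. -/
def BiconnSet (R : V → V → Prop) (S : Set V) : Prop :=
  (∃ a ∈ S, ∃ b ∈ S, R a b) ∧ ConnOn R S ∧ ∀ w ∈ S, ConnOn R (S \ {w})

/-- A biconnected component: a maximal biconnected vertex set. -/
def IsBCC (R : V → V → Prop) (S : Set V) : Prop :=
  BiconnSet R S ∧ ∀ S', BiconnSet R S' → S ⊆ S' → S' = S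

/-- A level-k network: every biconnected component has at most `k` recombination
vertices. -/
def LevelK (k : ℕ) (R : V → V → Prop) : Prop :=
  ∀ S, IsBCC R S → ({v ∈ S | inDeg R v = 2}).ncard ≤ k

/-- A valid (non-redundant) network: every nontrivial biconnected component has at
least three outgoing arcs. -/
def GoodNet (R : V → V → Prop) : Prop :=
  IsPhyloNet R ∧ ∀ S, IsBCC R S → 3 ≤ S.ncard →
    3 ≤ {p : V × V | R p.1 p.2 ∧ p.1 ∈ S ∧ p.2 ∉ S}.ncard

end Phylo
namespace PhyloProof
open Phylo Relation List

variable {V : Type*}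

/-- Undirected adjacency. -/
def U (R : V → V → Prop) (p q : V) : Prop := R p q ∨ R q p

lemma U_symm {R : V → V → Prop} {p q : V} (h : U R p q) : U R q p := Or.symm h

/-- Walk within a set `S`. -/
def rwalk (R : V → V → Prop) (S : Set V) (a b : V) : Prop :=
  Relation.ReflTransGen (fun p q => p ∈ S ∧ q ∈ S ∧ (R p q ∨ R q p)) a b

variable {R : V → V → Prop}

lemma connOn_iff {S : Set V} : ConnOn R S ↔ ∀ a ∈ S, ∀ b ∈ S, rwalk R S a b := Iff.rfl

lemma rwalk.symm {S : Set V} {a b : V} (h : rwalk R S a b) : rwalk R S b a := by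
  induction h with
  | refl => exact Relation.ReflTransGen.refl
  | tail _ hbc ih => exact Relation.ReflTransGen.head ⟨hbc.2.1, hbc.1, hbc.2.2.symm⟩ ih

lemma rwalk.trans {S : Set V} {a b c : V} (h : rwalk R S a b) (h' : rwalk R S b c) :
    rwalk R S a c := Relation.ReflTransGen.trans h h'

lemma rwalk.mono {S T : Set V} (hST : S ⊆ T) {a b : V} (h : rwalk R S a b) : rwalk R T a b :=
  Relation.ReflTransGen.mono (r := fun p q => p ∈ S ∧ q ∈ S ∧ (R p q ∨ R q p))
    (p := fun p q => p ∈ T ∧ q ∈ T ∧ (R p q ∨ R q p)) (fun _ _ h => ⟨hST h.1, hST h.2.1, h.2.2⟩) _ _ h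

lemma connOn_of_base {S : Set V} {v : V} (hv : v ∈ S) (h : ∀ x ∈ S, rwalk R S x v) :
    ConnOn R S := fun a ha b hb => (h a ha).trans (h b hb).symm

lemma rwalk_head {x : V} {t : List V} (h : (x :: t).Chain' (U R)) {S : Set V}
    (hS : ∀ y ∈ x :: t, y ∈ S) : ∀ y ∈ x :: t, rwalk R S x y := by
  induction t generalizing x with
  | nil => intro y hy; simp at hy; subst hy; exact Relation.ReflTransGen.refl
  | cons z t ih =>
    intro y hy
    rcases List.mem_cons.mp hy with rfl | hy'
    · exact Relation.ReflTransGen.refl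
    · have hxz : U R x z := (List.isChain_cons_cons.mp h).1
      have hstep : rwalk R S x z :=
        Relation.ReflTransGen.single ⟨hS x (by simp), hS z (by simp), hxz⟩
      exact hstep.trans (ih (List.isChain_cons_cons.mp h).2
        (fun y hy => hS y (List.mem_cons_of_mem _ hy)) y hy')

lemma rwalk_of_chain {l : List V} (hl : l.Chain' (U R)) {S : Set V} (hS : ∀ x ∈ l, x ∈ S)
    {a b : V} (ha : a ∈ l) (hb : b ∈ l) : rwalk R S a b := by
  cases l with
  | nil => simp at ha
  | cons x t => exact ((rwalk_head hl hS a ha).symm).trans (rwalk_head hl hS b hb)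

lemma connOn_diff {S : Set V} (hS : BiconnSet R S) (w : V) : ConnOn R (S \ {w}) := by
  by_cases hw : w ∈ S
  · exact hS.2.2 w hw
  · rw [Set.diff_singleton_eq_self hw]; exact hS.2.1

lemma connOn_union {S T : Set V} (hS : ConnOn R S) (hT : ConnOn R T) {x : V}
    (hxS : x ∈ S) (hxT : x ∈ T) : ConnOn R (S ∪ T) := by
  apply connOn_of_base (Set.mem_union_left _ hxS)
  rintro y (hy | hy)
  · exact rwalk.mono Set.subset_union_left (hS y hy x hxS)
  · exact rwalk.mono Set.subset_union_right (hT y hy x hxT)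

lemma biconn_union {S T : Set V} (hS : BiconnSet R S) (hT : BiconnSet R T) {x y : V}
    (hxy : x ≠ y) (hxS : x ∈ S) (hxT : x ∈ T) (hyS : y ∈ S) (hyT : y ∈ T) :
    BiconnSet R (S ∪ T) := by
  refine ⟨?_, connOn_union hS.2.1 hT.2.1 hxS hxT, ?_⟩
  · obtain ⟨a, ha, b, hb, hab⟩ := hS.1
    exact ⟨a, Or.inl ha, b, Or.inl hb, hab⟩
  · intro w _
    have hdiff : (S ∪ T) \ {w} = (S \ {w}) ∪ (T \ {w}) := by
      ext z; simp [Set.mem_diff, Set.mem_union]; tauto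
    rw [hdiff]
    rcases eq_or_ne x w with heq | hxw
    · subst heq
      refine connOn_union (connOn_diff hS x) (connOn_diff hT x) (x := y) ?_ ?_
      · exact ⟨hyS, by simpa using fun h => hxy h.symm⟩
      · exact ⟨hyT, by simpa using fun h => hxy h.symm⟩
    · refine connOn_union (connOn_diff hS w) (connOn_diff hT w) (x := x) ?_ ?_
      · exact ⟨hxS, by simpa using hxw⟩
      · exact ⟨hxT, by simpa using hxw⟩

lemma exists_isBCC [Finite V] {S : Set V} (hS : BiconnSet R S) : ∃ B, IsBCC R B ∧ S ⊆ B := by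
  obtain ⟨B, hB, hmax⟩ := Set.Finite.exists_maximalFor (id : Set V → Set V)
    {T : Set V | BiconnSet R T ∧ S ⊆ T} (Set.toFinite _) ⟨S, hS, subset_rfl⟩
  exact ⟨B, ⟨hB.1, fun S' hS' hsub => Set.Subset.antisymm (hmax ⟨hS', hB.2.trans hsub⟩ hsub) hsub⟩, hB.2⟩

end PhyloProof
namespace PhyloProof
open Phylo Relation List

variable {V : Type*} {R : V → V → Prop}

lemma not_R_self (hacyc : ∀ v, ¬ Relation.TransGen R v v) (v : V) : ¬ R v v :=
  fun h => hacyc v (Relation.TransGen.single h)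

lemma ne_of_R (hacyc : ∀ v, ¬ Relation.TransGen R v v) {a b : V} (h : R a b) : a ≠ b := by
  rintro rfl; exact not_R_self hacyc a h

lemma ne_of_U (hacyc : ∀ v, ¬ Relation.TransGen R v v) {a b : V} (h : U R a b) : a ≠ b := by
  rcases h with h | h
  · exact ne_of_R hacyc h
  · exact (ne_of_R hacyc h).symm

lemma transGen_of_rtg (hacyc : ∀ v, ¬ Relation.TransGen R v v) {a b : V}
    (h : Relation.ReflTransGen R a b) (hne : a ≠ b) : Relation.TransGen R a b :=
  (Relation.reflTransGen_iff_eq_or_transGen.mp h).resolve_left (fun h' => hne h'.symm)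

lemma no_rtg_cycle (hacyc : ∀ v, ¬ Relation.TransGen R v v) {a b : V}
    (h1 : Relation.ReflTransGen R a b) (h2 : Relation.ReflTransGen R b a) : a = b := by
  by_contra hne
  exact hacyc a ((transGen_of_rtg hacyc h1 hne).trans
    (transGen_of_rtg hacyc h2 (Ne.symm hne)))

lemma rtg_head_of_chain {l : List V} {a : V} (hch : l.Chain' R) (hhd : l.head? = some a) :
    ∀ x ∈ l, Relation.ReflTransGen R a x := by
  induction l generalizing a with
  | nil => simp
  | cons c t ih =>
    have hca : c = a := by simpa using hhd
    rcases hca with rfl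
    intro x hx
    rcases List.mem_cons.mp hx with rfl | hx'
    · exact Relation.ReflTransGen.refl
    · cases t with
      | nil => simp at hx'
      | cons d t' =>
        exact Relation.ReflTransGen.head (List.isChain_cons_cons.mp hch).1
          (ih (List.isChain_cons_cons.mp hch).2 rfl x hx')

lemma rtg_last_of_chain {l : List V} {b : V} (hch : l.Chain' R) (hlast : l.getLast? = some b) :
    ∀ x ∈ l, Relation.ReflTransGen R x b := by
  intro x hx
  have hch' : l.reverse.Chain' (Function.swap R) := by
    unfold List.Chain'; rw [List.isChain_reverse]
    exact hch.imp (fun _ _ h => h)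
  have := rtg_head_of_chain (R := Function.swap R) hch' (by simpa using hlast) x (by simpa using hx)
  exact Relation.reflTransGen_swap.mp this

/-- A (list) walk from `a` to `b`. -/
def IsWalk (R : V → V → Prop) (a b : V) (l : List V) : Prop :=
  l.Chain' (U R) ∧ l.head? = some a ∧ l.getLast? = some b

lemma IsWalk.ne_nil {a b : V} {l : List V} (h : IsWalk R a b l) : l ≠ [] := by
  rintro rfl; simp [IsWalk] at h

lemma IsWalk.mem_left {a b : V} {l : List V} (h : IsWalk R a b l) : a ∈ l := by
  cases l with
  | nil => simp [IsWalk] at h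
  | cons x t =>
    have : x = a := by simpa using h.2.1
    rcases this with rfl
    simp

lemma IsWalk.mem_right {a b : V} {l : List V} (h : IsWalk R a b l) : b ∈ l := by
  have hne := h.ne_nil
  have h2 := h.2.2
  rw [List.getLast?_eq_getLast_of_ne_nil hne] at h2
  have h3 : l.getLast hne = b := by injection h2
  exact h3 ▸ List.getLast_mem hne

lemma IsWalk.single {a : V} : IsWalk R a a [a] := ⟨List.isChain_singleton a, rfl, rfl⟩

lemma IsWalk.reverse {a b : V} {l : List V} (h : IsWalk R a b l) : IsWalk R b a l.reverse := by
  refine ⟨?_, ?_, ?_⟩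
  · unfold List.Chain'; rw [List.isChain_reverse]
    exact h.1.imp (fun _ _ h => Or.symm h)
  · rw [List.head?_reverse]; exact h.2.2
  · rw [List.getLast?_reverse]; exact h.2.1

lemma IsWalk.append {a m b : V} {l1 l2 : List V} (h1 : IsWalk R a m l1) (h2 : IsWalk R m b l2) :
    IsWalk R a b (l1 ++ l2.tail) := by
  obtain ⟨c1, hd1, lt1⟩ := h1
  obtain ⟨c2, hd2, lt2⟩ := h2
  cases l2 with
  | nil => simp at hd2
  | cons x t =>
    have : x = m := by simpa using hd2
    rcases this with rfl
    cases t with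
    | nil =>
      have : x = b := by simpa using lt2
      rcases this with rfl
      simpa using ⟨c1, hd1, lt1⟩
    | cons y t' =>
      refine ⟨?_, ?_, ?_⟩
      · show Chain' (U R) (l1 ++ y :: t')
        unfold List.Chain'; rw [List.isChain_append]
        refine ⟨c1, (List.isChain_cons_cons.mp c2).2, ?_⟩
        intro p hp q hq
        rw [lt1] at hp
        have hpx : x = p := by simpa using hp
        have hqy : y = q := by simpa using hq
        rw [← hpx, ← hqy]
        exact (List.isChain_cons_cons.mp c2).1
      · show (l1 ++ y :: t').head? = some a
        rw [List.head?_append_of_ne_nil _ (IsWalk.ne_nil (R := R) ⟨c1, hd1, lt1⟩)]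
        exact hd1
      · show (l1 ++ y :: t').getLast? = some b
        rw [List.getLast?_append_of_ne_nil _ (by simp : (y :: t') ≠ [])]
        simpa using lt2

lemma IsWalk.cons {a b c : V} {l : List V} (h : IsWalk R b c l) (hU : U R a b) :
    IsWalk R a c (a :: l) := by
  obtain ⟨ch, hd, lt⟩ := h
  cases l with
  | nil => simp at hd
  | cons x t =>
    have : x = b := by simpa using hd
    rcases this with rfl
    exact ⟨List.isChain_cons_cons.mpr ⟨hU, ch⟩, rfl, by rw [List.getLast?_cons_cons]; exact lt⟩

lemma IsWalk.concat {a b c : V} {l : List V} (h : IsWalk R a b l) (hU : U R b c) :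
    IsWalk R a c (l ++ [c]) := by
  refine ⟨?_, ?_, by rw [List.getLast?_concat]⟩
  · unfold List.Chain'; rw [List.isChain_append]
    refine ⟨h.1, by simp, ?_⟩
    intro p hp q hq
    rw [h.2.2] at hp
    have hpb : b = p := by simpa using hp
    have hqc : c = q := by simpa using hq
    rw [← hpb, ← hqc]
    exact hU
  · rw [List.head?_append_of_ne_nil _ h.ne_nil]; exact h.2.1

lemma IsWalk.of_chainR {l : List V} {a b : V} (hch : l.Chain' R) (hhd : l.head? = some a)
    (hlast : l.getLast? = some b) : IsWalk R a b l :=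
  ⟨hch.imp (fun _ _ h => Or.inl h), hhd, hlast⟩

/-- From reflexive-transitive closure, get a nodup directed path. -/
lemma exists_dpath {a b : V} (h : Relation.ReflTransGen R a b) :
    ∃ l : List V, l.Chain' R ∧ l.head? = some a ∧ l.getLast? = some b ∧ l.Nodup := by
  induction h using Relation.ReflTransGen.head_induction_on with
  | refl => exact ⟨[b], List.isChain_singleton b, rfl, rfl, by simp⟩
  | head hac hcb ih =>
    obtain ⟨l, hch, hhd, hlast, hnd⟩ := ih
    rename_i a' c
    by_cases ha : a' ∈ l
    · obtain ⟨m1, m2, rfl⟩ := List.append_of_mem ha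
      have hsuf : (a' :: m2) <:+ m1 ++ a' :: m2 := ⟨m1, rfl⟩
      refine ⟨a' :: m2, hch.suffix hsuf, rfl, ?_, hnd.sublist hsuf.sublist⟩
      rw [← hlast, List.getLast?_append_of_ne_nil _ (by simp)]
    · refine ⟨a' :: l, ?_, rfl, ?_, by rw [List.nodup_cons]; exact ⟨ha, hnd⟩⟩
      · refine List.isChain_cons.mpr ⟨?_, hch⟩
        intro y hy; rw [hhd] at hy
        have hyc : c = y := by simpa using hy
        rw [← hyc]
        exact hac
      · cases l with
        | nil => simp at hhd
        | cons x t => rw [List.getLast?_cons_cons]; exact hlast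

lemma exists_dwalk {a b : V} (h : Relation.ReflTransGen R a b) :
    ∃ l : List V, IsWalk R a b l ∧ l.Nodup ∧ l.Chain' R := by
  obtain ⟨l, hch, hd, lt, nd⟩ := exists_dpath h
  exact ⟨l, IsWalk.of_chainR hch hd lt, nd, hch⟩

lemma dwalk_rtg_head {l : List V} {a b : V} (hch : l.Chain' R) (hhd : l.head? = some a) :
    ∀ x ∈ l, Relation.ReflTransGen R a x := rtg_head_of_chain hch hhd

/-- The underlying simple graph. -/
def ug (R : V → V → Prop) : SimpleGraph V where
  Adj a b := a ≠ b ∧ U R a b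
  symm := ⟨fun _ _ h => ⟨h.1.symm, Or.symm h.2⟩⟩
  loopless := ⟨fun _ h => h.1 rfl⟩

lemma walk_of_chain (hacyc : ∀ v, ¬ Relation.TransGen R v v) {l : List V} {a b : V}
    (hch : l.Chain' (U R)) (hhd : l.head? = some a) (hlast : l.getLast? = some b) :
    ∃ w : (ug R).Walk a b, w.support = l := by
  induction l generalizing a with
  | nil => simp at hhd
  | cons x t ih =>
    have hxa : x = a := by simpa using hhd
    subst hxa
    cases t with
    | nil =>
      have : x = b := by simpa using hlast
      rcases this with rfl
      exact ⟨SimpleGraph.Walk.nil, by simp⟩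
    | cons y t' =>
      have hxy : U R x y := (List.isChain_cons_cons.mp hch).1
      have hlast' : (y :: t').getLast? = some b := by rw [← hlast, List.getLast?_cons_cons]
      obtain ⟨w, hw⟩ := ih (a := y) (List.isChain_cons_cons.mp hch).2 rfl hlast'
      exact ⟨SimpleGraph.Walk.cons (show (ug R).Adj x y from ⟨ne_of_U hacyc hxy, hxy⟩) w, by simp [hw]⟩

/-- Extract a simple (nodup) walk from any walk, within the same vertex set. -/
lemma IsWalk.toSimple (hacyc : ∀ v, ¬ Relation.TransGen R v v) {l : List V} {a b : V}
    (h : IsWalk R a b l) :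
    ∃ m : List V, IsWalk R a b m ∧ m.Nodup ∧ ∀ x ∈ m, x ∈ l := by
  letI := Classical.decEq V
  obtain ⟨w, hw⟩ := walk_of_chain hacyc h.1 h.2.1 h.2.2
  refine ⟨w.bypass.support, ⟨?_, ?_, ?_⟩, w.bypass_isPath.support_nodup, ?_⟩
  · exact (w.bypass.isChain_adj_support).imp (fun _ _ h => h.2)
  · rw [List.head?_eq_head (by simp : w.bypass.support ≠ [])]
    rw [SimpleGraph.Walk.head_support]
  · rw [List.getLast?_eq_getLast_of_ne_nil (by simp : w.bypass.support ≠ [])]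
    rw [SimpleGraph.Walk.getLast_support]
  · intro x hx; exact hw ▸ w.support_bypass_subset hx

end PhyloProof
namespace PhyloProof
open Phylo Relation List

variable {V : Type*} {R : V → V → Prop}

lemma ear_biconn {B : Set V} (hB : BiconnSet R B) {x y : V} (hx : x ∈ B) (hy : y ∈ B)
    (hxy : x ≠ y) {mid : List V} (hnd : mid.Nodup)
    (hout : ∀ v ∈ mid, v ∉ B) (hchain : Chain' (U R) ((x :: mid) ++ [y])) :
    BiconnSet R (B ∪ {v | v ∈ mid}) := by
  set S' : Set V := B ∪ {v | v ∈ mid} with hS'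
  have hxS : x ∈ S' := Or.inl hx
  have hyS : y ∈ S' := Or.inl hy
  have hmidS : ∀ v ∈ mid, v ∈ S' := fun v hv => Or.inr hv
  have hpre : Chain' (U R) (x :: mid) := (List.isChain_append.mp hchain).1
  have hsuf : Chain' (U R) (mid ++ [y]) := by
    have h2 := hchain.tail
    simpa [List.Chain'] using h2
  refine ⟨?_, ?_, ?_⟩
  · obtain ⟨a, ha, b, hb, hab⟩ := hB.1
    exact ⟨a, Or.inl ha, b, Or.inl hb, hab⟩
  · apply connOn_of_base hxS
    rintro z (hz | hz)
    · exact rwalk.mono Set.subset_union_left (hB.2.1 z hz x hx)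
    · exact rwalk_of_chain hpre (fun v hv => by
        rcases List.mem_cons.mp hv with rfl | hv'
        · exact hxS
        · exact hmidS v hv') (List.mem_cons_of_mem _ hz) (by simp)
  · intro w hw
    by_cases hwB : w ∈ B
    · have hwmid : w ∉ mid := fun h => hout w h hwB
      rcases eq_or_ne w x with rfl | hwx
      · -- removing x; base y
        have hyS' : y ∈ S' \ {w} := ⟨hyS, by simp [Ne.symm hxy]⟩
        apply connOn_of_base hyS'
        rintro z ⟨hz | hz, hzw⟩
        · have : rwalk R (B \ {w}) z y := hB.2.2 w hwB z ⟨hz, hzw⟩ y ⟨hy, by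
            simp only [Set.mem_singleton_iff]
            exact Ne.symm hxy⟩
          exact rwalk.mono (show B \ {w} ⊆ S' \ {w} from fun u hu => ⟨Or.inl hu.1, hu.2⟩) this
        · refine rwalk_of_chain hsuf (fun v hv => ?_) (List.mem_append_left _ hz) (by simp)
          rcases List.mem_append.mp hv with hv' | hv'
          · refine ⟨hmidS v hv', ?_⟩
            simp only [Set.mem_singleton_iff]
            rintro rfl
            exact hout v hv' hwB
          · have : v = y := by simpa using hv'
            rcases this with rfl
            exact hyS'
      · -- removing w ∈ B, w ≠ x; base x
        have hxS' : x ∈ S' \ {w} := ⟨hxS, by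
          simp only [Set.mem_singleton_iff]
          exact fun h => hwx h.symm⟩
        apply connOn_of_base hxS'
        rintro z ⟨hz | hz, hzw⟩
        · have : rwalk R (B \ {w}) z x := hB.2.2 w hwB z ⟨hz, hzw⟩ x ⟨hx, by
            simp; exact fun h => hwx h.symm⟩
          exact rwalk.mono (show B \ {w} ⊆ S' \ {w} from fun u hu => ⟨Or.inl hu.1, hu.2⟩) this
        · refine rwalk_of_chain hpre (fun v hv => ?_) (List.mem_cons_of_mem _ hz) (by simp)
          rcases List.mem_cons.mp hv with rfl | hv'
          · exact hxS'
          · refine ⟨hmidS v hv', ?_⟩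
            simp only [Set.mem_singleton_iff]
            rintro rfl
            exact hout v hv' hwB
    · -- w ∈ mid
      have hwm : w ∈ mid := by
        rcases hw with h | h
        · exact absurd h hwB
        · exact h
      obtain ⟨m1, m2, rfl⟩ := List.append_of_mem hwm
      have hndp := List.nodup_append'.mp hnd
      have hwm1 : w ∉ m1 := fun h => (hndp.2.2 h (by simp)).elim
      have hwm2 : w ∉ m2 := by
        have := hndp.2.1
        rw [List.nodup_cons] at this
        exact this.1
      have hch1 : Chain' (U R) (x :: m1) :=
        hpre.prefix ⟨w :: m2, by simp⟩
      have hch2 : Chain' (U R) (m2 ++ [y]) := by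
        refine hchain.suffix ⟨x :: m1 ++ [w], by simp⟩
      have hxw : x ≠ w := fun h => hwB (h ▸ hx)
      have hyw : y ≠ w := fun h => hwB (h ▸ hy)
      have hxS' : x ∈ S' \ {w} := ⟨hxS, by simpa using hxw⟩
      have hyS' : y ∈ S' \ {w} := ⟨hyS, by simpa using hyw⟩
      apply connOn_of_base hxS'
      rintro z ⟨hz | hz, hzw⟩
      · have : rwalk R B z x := hB.2.1 z hz x hx
        exact rwalk.mono (show B ⊆ S' \ {w} from fun u hu => ⟨Or.inl hu, fun h => hwB ((h : u = w) ▸ hu)⟩) this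
      · have hzw' : z ≠ w := by simpa using hzw
        rcases List.mem_append.mp hz with hz1 | hz2
        · refine rwalk_of_chain hch1 (fun v hv => ?_) (List.mem_cons_of_mem _ hz1) (by simp)
          rcases List.mem_cons.mp hv with rfl | hv'
          · exact hxS'
          · refine ⟨hmidS v (by simp [hv']), ?_⟩
            simp only [Set.mem_singleton_iff]
            rintro rfl
            exact hwm1 hv'
        · rcases List.mem_cons.mp hz2 with rfl | hz2'
          · exact absurd rfl hzw'
          · have step1 : rwalk R (S' \ {w}) z y := by
              refine rwalk_of_chain hch2 (fun v hv => ?_) (List.mem_append_left _ hz2') (by simp)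
              rcases List.mem_append.mp hv with hv' | hv'
              · refine ⟨hmidS v (by simp [hv']), ?_⟩
                simp only [Set.mem_singleton_iff]
                rintro rfl
                exact hwm2 hv'
              · have : v = y := by simpa using hv'
                rcases this with rfl
                exact hyS'
            have step2 : rwalk R (S' \ {w}) y x := by
              have : rwalk R B y x := hB.2.1 y hy x hx
              exact rwalk.mono (show B ⊆ S' \ {w} from fun u hu => ⟨Or.inl hu, fun h => hwB ((h : u = w) ▸ hu)⟩) this
            exact step1.trans step2

lemma no_ear {B : Set V} (hB : IsBCC R B) {x y : V} (hx : x ∈ B) (hy : y ∈ B)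
    (hxy : x ≠ y) {mid : List V} (hne : mid ≠ []) (hnd : mid.Nodup)
    (hout : ∀ v ∈ mid, v ∉ B) (hchain : Chain' (U R) ((x :: mid) ++ [y])) : False := by
  have hbig := ear_biconn hB.1 hx hy hxy hnd hout hchain
  have heq := hB.2 _ hbig Set.subset_union_left
  cases mid with
  | nil => exact hne rfl
  | cons m t =>
    have hmB : m ∈ B := by
      rw [← heq]
      exact Or.inr (by simp)
    exact hout m (by simp) hmB

/-- The main tool: no walk between two distinct vertices of a biconnected component
can leave the component. -/
lemma no_ear_walk (hacyc : ∀ v, ¬ Relation.TransGen R v v) {B : Set V} (hB : IsBCC R B)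
    {x y : V} (hx : x ∈ B) (hy : y ∈ B) (hxy : x ≠ y) {a b : V} {l : List V}
    (hw : IsWalk R a b l) (hUa : U R x a) (hUb : U R b y)
    (hout : ∀ v ∈ l, v ∉ B) : False := by
  obtain ⟨m, hm, hnd, hsub⟩ := hw.toSimple hacyc
  have hfull : IsWalk R x y ((x :: m) ++ [y]) := (hm.cons hUa).concat hUb
  exact no_ear hB hx hy hxy hm.ne_nil hnd (fun v hv => hout v (hsub v hv)) hfull.1

end PhyloProof
namespace PhyloProof
open Phylo Relation List

variable {V : Type*} {R : V → V → Prop}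

/-- Split a list at the first element satisfying `P`. -/
lemma exists_first_split {P : V → Prop} {l : List V} (h : ∃ x ∈ l, P x) :
    ∃ l1 z l2, l = l1 ++ z :: l2 ∧ P z ∧ ∀ u ∈ l1, ¬ P u := by
  classical
  induction l with
  | nil => simp at h
  | cons a t ih =>
    by_cases hPa : P a
    · exact ⟨[], a, t, by simp, hPa, by simp⟩
    · have ht : ∃ x ∈ t, P x := by
        obtain ⟨x, hx, hPx⟩ := h
        rcases List.mem_cons.mp hx with rfl | hx'
        · exact absurd hPx hPa
        · exact ⟨x, hx', hPx⟩
      obtain ⟨l1, z, l2, heq, hPz, hnone⟩ := ih ht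
      refine ⟨a :: l1, z, l2, by simp [heq], hPz, ?_⟩
      intro u hu
      rcases List.mem_cons.mp hu with rfl | hu'
      · exact hPa
      · exact hnone u hu'

/-- Split a list at the last element satisfying `P`. -/
lemma exists_last_split {P : V → Prop} {l : List V} (h : ∃ x ∈ l, P x) :
    ∃ l1 z l2, l = l1 ++ z :: l2 ∧ P z ∧ ∀ u ∈ l2, ¬ P u := by
  classical
  induction l with
  | nil => simp at h
  | cons a t ih =>
    by_cases ht : ∃ x ∈ t, P x
    · obtain ⟨l1, z, l2, heq, hPz, hnone⟩ := ih ht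
      exact ⟨a :: l1, z, l2, by simp [heq], hPz, hnone⟩
    · push_neg at ht
      have hPa : P a := by
        obtain ⟨x, hx, hPx⟩ := h
        rcases List.mem_cons.mp hx with rfl | hx'
        · exact hPx
        · exact absurd hPx (ht x hx')
      exact ⟨[], a, t, by simp, hPa, ht⟩

/-- Splitting a directed chain at a split point. -/
lemma dchain_split {l1 : List V} {z : V} {l2 : List V} {a b : V}
    (hch : (l1 ++ z :: l2).Chain' R) (hhd : (l1 ++ z :: l2).head? = some a)
    (hlast : (l1 ++ z :: l2).getLast? = some b) (hne : l1 ≠ []) :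
    ∃ w, IsWalk R a w l1 ∧ l1.Chain' R ∧ R w z := by
  have hsplit := List.isChain_append.mp hch
  have hlw : l1.getLast? = some (l1.getLast hne) := List.getLast?_eq_getLast_of_ne_nil hne
  refine ⟨l1.getLast hne, ⟨hsplit.1.imp (fun _ _ h => Or.inl h), ?_, hlw⟩, hsplit.1, ?_⟩
  · rw [← hhd, List.head?_append_of_ne_nil _ hne]
  · exact hsplit.2.2 _ (by rw [hlw]; simp) z (by simp)

/-- First B-entry ear argument: nothing in `B` is reachable from the head of an
arc leaving an `IsBCC` set `B`. -/
lemma reach_out_disjoint (hacyc : ∀ v, ¬ Relation.TransGen R v v)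
    {B : Set V} (hB : IsBCC R B) {p q : V} (hR : R p q)
    (hpB : p ∈ B) (hqB : q ∉ B) {x : V} (hxB : x ∈ B) (hreach : Relation.ReflTransGen R q x) :
    False := by
  obtain ⟨l, hw, hnd, hch⟩ := exists_dwalk hreach
  have hin : ∃ u ∈ l, u ∈ B := ⟨x, hw.mem_right, hxB⟩
  obtain ⟨l1, z, l2, heq, hzB, hnone⟩ := exists_first_split hin
  subst heq
  have hl1ne : l1 ≠ [] := by
    rintro rfl
    have : z = q := by simpa using hw.2.1
    exact hqB (this ▸ hzB)
  obtain ⟨w, hwalk, hch1, hwz⟩ := dchain_split hch hw.2.1 hw.2.2 hl1ne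
  have hpz : p ≠ z := by
    rintro rfl
    have hqz : Relation.ReflTransGen R q p :=
      rtg_head_of_chain hch hw.2.1 p (by simp)
    exact hacyc q ((transGen_of_rtg hacyc hqz
      (fun h => hqB (h ▸ hpB))).trans (Relation.TransGen.single hR))
  exact no_ear_walk hacyc hB hpB hzB hpz hwalk (Or.inl hR) (Or.inl hwz) hnone

end PhyloProof
namespace PhyloProof
open Phylo Relation List

variable {V : Type*} {R : V → V → Prop}

lemma reach_reach_disjoint (hacyc : ∀ v, ¬ Relation.TransGen R v v) {B : Set V}
    (hB : IsBCC R B) {p1 q1 p2 q2 w : V}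
    (h1 : R p1 q1) (hp1 : p1 ∈ B) (hq1 : q1 ∉ B) (h2 : R p2 q2) (hp2 : p2 ∈ B) (hq2 : q2 ∉ B)
    (hp : p1 ≠ p2) (hw1 : Relation.ReflTransGen R q1 w) (hw2 : Relation.ReflTransGen R q2 w) :
    False := by
  obtain ⟨l1, hwk1, _, hch1⟩ := exists_dwalk hw1
  obtain ⟨l2, hwk2, _, hch2⟩ := exists_dwalk hw2
  have hwalk : IsWalk R q1 q2 (l1 ++ l2.reverse.tail) := hwk1.append hwk2.reverse
  have hout : ∀ v ∈ l1 ++ l2.reverse.tail, v ∉ B := by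
    intro v hv hvB
    rcases List.mem_append.mp hv with h | h
    · exact reach_out_disjoint hacyc hB h1 hp1 hq1 hvB (rtg_head_of_chain hch1 hwk1.2.1 v h)
    · have hv2 : v ∈ l2 := by
        have := List.mem_of_mem_tail h
        exact List.mem_reverse.mp this
      exact reach_out_disjoint hacyc hB h2 hp2 hq2 hvB (rtg_head_of_chain hch2 hwk2.2.1 v hv2)
  exact no_ear_walk hacyc hB hp1 hp2 hp hwalk (Or.inl h1) (Or.inr h2) hout

lemma outDeg_le_two (hphy : IsPhyloNet R) (v : V) : outDeg R v ≤ 2 := by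
  rcases hphy.2.2 v with ⟨_, h⟩ | ⟨_, h⟩ | ⟨_, h⟩ | ⟨_, h⟩ <;> omega

lemma exists_parent (h : inDeg R v ≠ 0) : ∃ u, R u v :=
  Set.nonempty_of_ncard_ne_zero h

lemma parents_two {v : V} (h : inDeg R v = 2) : ∃ u1 u2, u1 ≠ u2 ∧ R u1 v ∧ R u2 v := by
  obtain ⟨a, b, hab, hset⟩ := Set.ncard_eq_two.mp h
  have ha : a ∈ {u | R u v} := by rw [hset]; simp
  have hb : b ∈ {u | R u v} := by rw [hset]; simp
  exact ⟨a, b, hab, ha, hb⟩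

lemma two_nbrs (hacyc : ∀ v, ¬ Relation.TransGen R v v) [Fintype V] {B : Set V}
    (hB : BiconnSet R B) (h3 : 3 ≤ B.ncard) {v : V} (hv : v ∈ B) :
    ∃ n1 n2, n1 ∈ B ∧ n2 ∈ B ∧ n1 ≠ n2 ∧ U R v n1 ∧ U R v n2 := by
  have hpick : ∀ (x y : V), ∃ b ∈ B, b ≠ x ∧ b ≠ y := by
    intro x y
    by_contra h
    push_neg at h
    have hsub : B ⊆ {x, y} := by
      intro b hb
      rcases eq_or_ne b x with rfl | hbx
      · simp
      · simp [h b hb hbx]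
    have h1 := Set.ncard_le_ncard hsub (Set.toFinite _)
    have h2 : ({x, y} : Set V).ncard ≤ 2 := (Set.ncard_insert_le _ _).trans (by simp)
    omega
  have hn1 : ∃ n ∈ B, U R v n := by
    obtain ⟨b, hbB, hbv, _⟩ := hpick v v
    have hwalk := hB.2.1 v hv b hbB
    rcases Relation.ReflTransGen.cases_head hwalk with heq | ⟨c, ⟨_, hcB, hU⟩, _⟩
    · exact absurd heq.symm hbv
    · exact ⟨c, hcB, hU⟩
  obtain ⟨n1, hn1B, hU1⟩ := hn1
  by_contra hcon
  push_neg at hcon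
  have huniq : ∀ n ∈ B, U R v n → n = n1 := by
    intro n hnB hUn
    by_contra hne
    exact hcon n n1 hnB hn1B hne hUn hU1
  obtain ⟨b2, hb2B, hb2v, hb2n1⟩ := hpick v n1
  have hvn1 : v ≠ n1 := ne_of_U hacyc hU1
  have hconn := hB.2.2 n1 hn1B
  have hwalk := hconn v ⟨hv, by simpa using hvn1⟩ b2 ⟨hb2B, by simpa using hb2n1⟩
  rcases Relation.ReflTransGen.cases_head hwalk with heq | ⟨c, ⟨_, hc, hU⟩, _⟩
  · exact hb2v heq.symm
  · exact (by simpa using hc.2 : c ≠ n1) (huniq c hc.1 hU)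

lemma tail_parent (hacyc : ∀ v, ¬ Relation.TransGen R v v) [Fintype V]
    (hphy : IsPhyloNet R) {B : Set V} (hB : BiconnSet R B) (h3 : 3 ≤ B.ncard)
    {p q : V} (hpB : p ∈ B) (hR : R p q) (hqB : q ∉ B) : ∃ t ∈ B, R t p := by
  obtain ⟨n1, n2, h1B, h2B, h12, hU1, hU2⟩ := two_nbrs hacyc hB h3 hpB
  rcases hU1 with h1 | h1
  swap
  · exact ⟨n1, h1B, h1⟩
  rcases hU2 with h2 | h2
  swap
  · exact ⟨n2, h2B, h2⟩
  exfalso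
  have hn1q : n1 ≠ q := fun h => hqB (h ▸ h1B)
  have hn2q : n2 ≠ q := fun h => hqB (h ▸ h2B)
  have hsub : ({n1, n2, q} : Set V) ⊆ {w | R p w} := by
    intro w hw
    rcases hw with rfl | rfl | rfl
    · exact h1
    · exact h2
    · exact hR
  have hcard : ({n1, n2, q} : Set V).ncard = 3 := by
    rw [Set.ncard_insert_of_notMem (by simp [h12, hn1q]) (Set.toFinite _),
      Set.ncard_insert_of_notMem (by simp [hn2q]) (Set.toFinite _), Set.ncard_singleton]
  have := Set.ncard_le_ncard hsub (Set.toFinite _)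
  have := outDeg_le_two hphy p
  unfold outDeg at this
  omega

lemma root_spec (hphy : IsPhyloNet R) : ∃ r, inDeg R r = 0 ∧ ∀ v, inDeg R v = 0 → v = r := by
  obtain ⟨r, hr, hu⟩ := hphy.2.1
  exact ⟨r, hr, fun v hv => hu v hv⟩

lemma wfR [Finite V] (hacyc : ∀ v, ¬ Relation.TransGen R v v) :
    WellFounded (fun a b : V => R a b) := by
  letI : IsTrans V (Relation.TransGen R) := ⟨fun a b c h1 h2 => h1.trans h2⟩
  letI : IsIrrefl V (Relation.TransGen R) := ⟨hacyc⟩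
  exact Subrelation.wf (fun h => Relation.TransGen.single h)
    (Finite.wellFounded_of_trans_of_irrefl _)

lemma wfRflip [Finite V] (hacyc : ∀ v, ¬ Relation.TransGen R v v) :
    WellFounded (fun a b : V => R b a) := by
  letI : IsTrans V (Relation.TransGen (Function.swap R)) := ⟨fun a b c h1 h2 => h1.trans h2⟩
  letI : IsIrrefl V (Relation.TransGen (Function.swap R)) :=
    ⟨fun v h => hacyc v (Relation.transGen_swap.mp h)⟩
  exact Subrelation.wf
    (r := Relation.TransGen (Function.swap R))
    (fun h => Relation.TransGen.single h)
    (Finite.wellFounded_of_trans_of_irrefl (Relation.TransGen (Function.swap R)))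

lemma root_reaches [Finite V] (hacyc : ∀ v, ¬ Relation.TransGen R v v)
    {r : V} (hu : ∀ v, inDeg R v = 0 → v = r) : ∀ v, Relation.ReflTransGen R r v := by
  intro v
  induction v using (wfR hacyc).induction with
  | _ v ih =>
    by_cases h0 : inDeg R v = 0
    · have := hu v h0
      rw [← this]
    · obtain ⟨u, hu'⟩ := exists_parent h0
      exact (ih u hu').tail hu'

lemma exists_leaf_below [Finite V] (hacyc : ∀ v, ¬ Relation.TransGen R v v) :
    ∀ v, ∃ ℓ, IsLf R ℓ ∧ Relation.ReflTransGen R v ℓ := by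
  intro v
  induction v using (wfRflip hacyc).induction with
  | _ v ih =>
    by_cases h0 : outDeg R v = 0
    · exact ⟨v, h0, Relation.ReflTransGen.refl⟩
    · obtain ⟨c, hc⟩ : ∃ c, R v c := Set.nonempty_of_ncard_ne_zero h0
      obtain ⟨ℓ, h1, h2⟩ := ih c hc
      exact ⟨ℓ, h1, Relation.ReflTransGen.head hc h2⟩

lemma exit_arc {B : Set V} {x w : V} (hx : x ∈ B) (hw : w ∉ B)
    (h : Relation.ReflTransGen R x w) :
    ∃ p q, R p q ∧ p ∈ B ∧ q ∉ B ∧ Relation.ReflTransGen R q w := by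
  revert hx
  induction h using Relation.ReflTransGen.head_induction_on with
  | refl => intro hx; exact absurd hx hw
  | head hac hrest ih =>
    rename_i a c
    intro haB
    by_cases hcB : c ∈ B
    · exact ih hcB
    · exact ⟨a, c, hac, haB, hcB, hrest⟩

end PhyloProof
namespace PhyloProof
open Phylo Relation List

variable {V : Type*} {R : V → V → Prop}

lemma IsWalk.uncons {a b : V} {l : List V} (h : IsWalk R a b l) :
    (l = [a] ∧ a = b) ∨ ∃ c t, l = a :: c :: t ∧ U R a c ∧ IsWalk R c b (c :: t) := by
  obtain ⟨hch, hhd, hlast⟩ := h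
  cases l with
  | nil => simp at hhd
  | cons x t =>
    have hxa : x = a := by simpa using hhd
    subst hxa
    cases t with
    | nil =>
      left
      refine ⟨rfl, ?_⟩
      simpa using hlast
    | cons c t' =>
      right
      refine ⟨c, t', rfl, (List.isChain_cons_cons.mp hch).1,
        (List.isChain_cons_cons.mp hch).2, rfl, ?_⟩
      rw [← hlast, List.getLast?_cons_cons]

lemma connOn_singleton {s : V} : ConnOn R {s} := by
  intro a ha b hb
  have : a = s := ha
  have hb' : b = s := hb
  subst this; subst hb'
  exact Relation.ReflTransGen.refl

lemma pair_biconn (hacyc : ∀ v, ¬ Relation.TransGen R v v) {a b : V} (hab : R a b) :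
    BiconnSet R {a, b} := by
  have hne : a ≠ b := ne_of_R hacyc hab
  have hstep : rwalk R {a, b} a b :=
    Relation.ReflTransGen.single ⟨by simp, by simp, Or.inl hab⟩
  refine ⟨⟨a, by simp, b, by simp, hab⟩, ?_, ?_⟩
  · rintro x (rfl | rfl) y (rfl | rfl)
    · exact Relation.ReflTransGen.refl
    · exact hstep
    · exact hstep.symm
    · exact Relation.ReflTransGen.refl
  · rintro w (rfl | rfl)
    · have hset : ({w, b} : Set V) \ {w} = {b} := by
        ext z; constructor
        · rintro ⟨rfl | rfl, hz2⟩
          · simp at hz2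
          · rfl
        · rintro rfl
          exact ⟨by simp, by simpa using hne.symm⟩
      rw [hset]; exact connOn_singleton
    · have hset : ({a, w} : Set V) \ {w} = {a} := by
        ext z; constructor
        · rintro ⟨rfl | rfl, hz2⟩
          · rfl
          · simp at hz2
        · rintro rfl
          exact ⟨by simp, by simpa using hne⟩
      rw [hset]; exact connOn_singleton

/-- Connect two distinct vertices reachable from a common vertex by a walk whose
vertices are all ancestors of one of them, and which avoids the first vertex. -/
lemma exists_walk_connect (hacyc : ∀ v, ¬ Relation.TransGen R v v) {r u1 u2 : V}
    (h1 : Relation.ReflTransGen R r u1) (h2 : Relation.ReflTransGen R r u2) (hne : u1 ≠ u2) :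
    ∃ c t, U R u1 c ∧ IsWalk R c u2 (c :: t) ∧ u1 ∉ c :: t ∧
      ∀ x ∈ c :: t, (Relation.ReflTransGen R x u1 ∨ Relation.ReflTransGen R x u2) := by
  obtain ⟨l2, hw2, hnd2, hch2⟩ := exists_dwalk h2
  by_cases hmem : u1 ∈ l2
  · have hu12 : Relation.ReflTransGen R u1 u2 := rtg_last_of_chain hch2 hw2.2.2 u1 hmem
    obtain ⟨m, hm, hndm, hchm⟩ := exists_dwalk hu12
    rcases hm.uncons with ⟨_, heq⟩ | ⟨c, t, heqm, hUc, hwct⟩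
    · exact absurd heq hne
    · refine ⟨c, t, hUc, hwct, ?_, ?_⟩
      · intro hu1
        have : u1 ∈ m := by rw [heqm]; exact List.mem_cons_of_mem _ hu1
        rw [heqm] at hndm
        exact (List.nodup_cons.mp hndm).1 hu1
      · intro x hx
        right
        exact rtg_last_of_chain hchm hm.2.2 x (by rw [heqm]; exact List.mem_cons_of_mem _ hx)
  · obtain ⟨l1, hw1, hnd1, hch1⟩ := exists_dwalk h1
    have hW : IsWalk R u1 u2 (l1.reverse ++ l2.tail) := hw1.reverse.append hw2
    rcases hW.uncons with ⟨_, heq⟩ | ⟨c, t, heqW, hUc, hwct⟩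
    · exact absurd heq hne
    · refine ⟨c, t, hUc, hwct, ?_, ?_⟩
      · intro hu1
        have hmem' : u1 ∈ (l1.reverse ++ l2.tail).tail := by rw [heqW]; exact hu1
        have hrevne : l1.reverse ≠ [] := by simp [hw1.ne_nil]
        cases hrev : l1.reverse with
        | nil => exact (hrevne hrev).elim
        | cons z zs =>
          rw [hrev] at hmem'
          have : u1 ∈ zs ++ l2.tail := by simpa using hmem'
          rcases List.mem_append.mp this with h | h
          · have hndrev : (z :: zs).Nodup := hrev ▸ (List.nodup_reverse.mpr hnd1)
            have hz : z = u1 := by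
              have := hw1.reverse.2.1
              rw [hrev] at this
              simpa using this
            rw [hz] at hndrev
            exact (List.nodup_cons.mp hndrev).1 h
          · exact hmem (List.mem_of_mem_tail h)
      · intro x hx
        have hx0 : x ∈ (l1.reverse ++ l2.tail).tail := by rw [heqW]; exact hx
        have hx' : x ∈ l1.reverse ++ l2.tail := List.mem_of_mem_tail hx0
        rcases List.mem_append.mp hx' with h | h
        · exact Or.inl (rtg_last_of_chain hch1 hw1.2.2 x (List.mem_reverse.mp h))
        · exact Or.inr (rtg_last_of_chain hch2 hw2.2.2 x (List.mem_of_mem_tail h))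

/-- Every recombination vertex lies in a biconnected component of size at least 3. -/
lemma recomb_in_blob [Fintype V] (hphy : IsPhyloNet R) {v : V} (hv : inDeg R v = 2) :
    ∃ B, IsBCC R B ∧ v ∈ B ∧ 3 ≤ B.ncard := by
  have hacyc := hphy.1
  obtain ⟨u1, u2, hu12, hR1, hR2⟩ := parents_two hv
  obtain ⟨r, hr0, hru⟩ := root_spec hphy
  have hreach := root_reaches hacyc hru
  obtain ⟨B, hB, hsub⟩ := exists_isBCC (pair_biconn hacyc hR1)
  have hu1B : u1 ∈ B := hsub (by simp)
  have hvB : v ∈ B := hsub (by simp)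
  refine ⟨B, hB, hvB, ?_⟩
  by_contra hlt
  push_neg at hlt
  have hcard2 : ({u1, v} : Set V).ncard = 2 :=
    Set.ncard_pair (ne_of_R hacyc hR1)
  have hBeq : ({u1, v} : Set V) = B := by
    apply Set.eq_of_subset_of_ncard_le hsub _ (Set.toFinite _)
    omega
  obtain ⟨c, t, hUc, hwct, hu1nt, hanc⟩ := exists_walk_connect hacyc (hreach u1) (hreach u2) hu12
  have hout : ∀ x ∈ c :: t, x ∉ B := by
    intro x hx hxB
    rw [← hBeq] at hxB
    rcases hxB with rfl | rfl
    · exact hu1nt hx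
    · rcases hanc x hx with h | h
      · rcases Relation.reflTransGen_iff_eq_or_transGen.mp h with heq | htg
        · rw [← heq] at hR1
          exact not_R_self hacyc u1 hR1
        · exact hacyc x (htg.tail hR1)
      · rcases Relation.reflTransGen_iff_eq_or_transGen.mp h with heq | htg
        · rw [← heq] at hR2
          exact not_R_self hacyc u2 hR2
        · exact hacyc x (htg.tail hR2)
  exact no_ear_walk hacyc hB hu1B hvB (ne_of_R hacyc hR1) hwct hUc (Or.inl hR2) hout

end PhyloProof
namespace PhyloProof
open Phylo Relation List

variable {V : Type*} {R : V → V → Prop}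

lemma tail_children (hacyc : ∀ v, ¬ Relation.TransGen R v v) [Fintype V]
    (hphy : IsPhyloNet R) {B : Set V} (hB : BiconnSet R B) (h3 : 3 ≤ B.ncard)
    {p q : V} (hpB : p ∈ B) (hpq : R p q) (hqB : q ∉ B) :
    ∀ q', R p q' → q' ∉ B → q' = q := by
  intro q' hpq' hq'B
  by_contra hne
  obtain ⟨n1, n2, h1B, h2B, h12, hU1, hU2⟩ := two_nbrs hacyc hB h3 hpB
  have hpairC : ({q, q'} : Set V) ⊆ {w | R p w} := by
    rintro w (rfl | rfl)
    · exact hpq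
    · exact hpq'
  have hchild : ∀ n, n ∈ B → U R p n → R n p := by
    intro n hnB hUn
    rcases hUn with h | h
    · exfalso
      have hnq : n ≠ q := fun hh => hqB (hh ▸ hnB)
      have hnq' : n ≠ q' := fun hh => hq'B (hh ▸ hnB)
      have hsub : ({n, q, q'} : Set V) ⊆ {w | R p w} := by
        rintro w (rfl | rfl | rfl)
        · exact h
        · exact hpq
        · exact hpq'
      have hcard : ({n, q, q'} : Set V).ncard = 3 := by
        rw [Set.ncard_insert_of_notMem (by simp [hnq, hnq']) (Set.toFinite _),
          Set.ncard_insert_of_notMem (by simp [Ne.symm hne]) (Set.toFinite _),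
          Set.ncard_singleton]
      have hle := Set.ncard_le_ncard hsub (Set.toFinite _)
      have hod := outDeg_le_two hphy p
      unfold outDeg at hod
      omega
    · exact h
  have hP1 : R n1 p := hchild n1 h1B hU1
  have hP2 : R n2 p := hchild n2 h2B hU2
  have hin : ({n1, n2} : Set V) ⊆ {u | R u p} := by
    rintro w (rfl | rfl)
    · exact hP1
    · exact hP2
  have hincard : ({n1, n2} : Set V).ncard = 2 := Set.ncard_pair h12
  have hinle := Set.ncard_le_ncard hin (Set.toFinite _)
  have houtcard : ({q, q'} : Set V).ncard = 2 := Set.ncard_pair (Ne.symm hne)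
  have houtle := Set.ncard_le_ncard hpairC (Set.toFinite _)
  rcases hphy.2.2 p with ⟨h1, h2⟩ | ⟨h1, h2⟩ | ⟨h1, h2⟩ | ⟨h1, h2⟩ <;>
    unfold inDeg at h1 <;> unfold outDeg at h2 <;> omega

lemma entry_closure (hacyc : ∀ v, ¬ Relation.TransGen R v v) [Fintype V]
    (hphy : IsPhyloNet R) {B : Set V} (hB : IsBCC R B) (h3 : 3 ≤ B.ncard)
    {p q : V} (hpq : R p q) (hpB : p ∈ B) (hqB : q ∉ B)
    {s t : V} (hs : Relation.ReflTransGen R q s) (hts : R t s)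
    (htq : ¬ Relation.ReflTransGen R q t) (htB : t ∉ B) : False := by
  obtain ⟨r, hr0, hru⟩ := root_spec hphy
  have hreach := root_reaches hacyc hru
  obtain ⟨lt, hwt, hndt, hcht⟩ := exists_dwalk (hreach t)
  have hqnotB : ∀ x, Relation.ReflTransGen R q x → x ∉ B := by
    intro x hqx hxB
    exact reach_out_disjoint hacyc hB hpq hpB hqB hxB hqx
  by_cases hBin : ∃ y ∈ lt, y ∈ B
  · obtain ⟨A, y, Bs, heq, hyB, hnone⟩ := exists_last_split hBin
    by_cases hyp : y = p
    · subst hyp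
      have hpt : Relation.ReflTransGen R y t :=
        rtg_last_of_chain hcht hwt.2.2 y (by rw [heq]; simp)
      obtain ⟨p'', q'', hR'', hp''B, hq''B, hq''t⟩ := exit_arc hpB htB hpt
      by_cases hpp : p'' = y
      · subst hpp
        have : q'' = q := tail_children hacyc hphy hB.1 h3 hp''B hpq hqB q'' hR'' hq''B
        exact htq (this ▸ hq''t)
      · exact reach_reach_disjoint hacyc hB hpq hpB hqB hR'' hp''B hq''B
          (fun hh => hpp hh.symm) hs (hq''t.tail hts)
    · obtain ⟨lq, hwq, _, hchq⟩ := exists_dwalk hs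
      have hchsuf : (y :: Bs).Chain' R := hcht.suffix ⟨A, by rw [heq]⟩
      have hlastsuf : (y :: Bs).getLast? = some t := by
        rw [← hwt.2.2, heq, List.getLast?_append_cons]
      cases Bs with
      | nil =>
        exfalso
        have : y = t := by simpa using hlastsuf
        exact htB (this ▸ hyB)
      | cons b0 Bs' =>
        have hRyb0 : R y b0 := (List.isChain_cons_cons.mp hchsuf).1
        have hwb0t : IsWalk R b0 t (b0 :: Bs') :=
          IsWalk.of_chainR (List.isChain_cons_cons.mp hchsuf).2 rfl
            (by rw [← hlastsuf, List.getLast?_cons_cons])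
        have W1 : IsWalk R q t (lq ++ [t]) := hwq.concat (Or.inr hts)
        have W : IsWalk R q b0 ((lq ++ [t]) ++ (b0 :: Bs').reverse.tail) :=
          W1.append hwb0t.reverse
        have hout : ∀ x ∈ (lq ++ [t]) ++ (b0 :: Bs').reverse.tail, x ∉ B := by
          intro x hx
          rcases List.mem_append.mp hx with hx1 | hx2
          · rcases List.mem_append.mp hx1 with hx3 | hx4
            · exact hqnotB x (rtg_head_of_chain hchq hwq.2.1 x hx3)
            · have : x = t := by simpa using hx4
              exact this ▸ htB
          · have hxBs : x ∈ b0 :: Bs' := List.mem_reverse.mp (List.mem_of_mem_tail hx2)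
            exact hnone x hxBs
        exact no_ear_walk hacyc hB hpB hyB (fun hh => hyp hh.symm) W (Or.inl hpq)
          (Or.inr hRyb0) hout
  · push_neg at hBin
    obtain ⟨tp, htpB, htpp⟩ := tail_parent hacyc hphy hB.1 h3 hpB hpq hqB
    obtain ⟨l2, hw2, hnd2, hch2⟩ := exists_dwalk (hreach tp)
    have hin2 : ∃ y ∈ l2, y ∈ B := ⟨tp, hw2.mem_right, htpB⟩
    obtain ⟨A2, y2, C2, heq2, hy2B, hnone2⟩ := exists_first_split hin2
    by_cases hy2p : y2 = p
    · subst hy2p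
      have hptp : Relation.ReflTransGen R y2 tp :=
        rtg_last_of_chain hch2 hw2.2.2 y2 (by rw [heq2]; simp)
      have htpy2 : tp ≠ y2 := ne_of_R hacyc htpp
      exact hacyc y2 ((transGen_of_rtg hacyc hptp (fun hh => htpy2 hh.symm)).tail htpp)
    · have hA2ne : A2 ≠ [] := by
        rintro rfl
        have : y2 = r := by
          have := hw2.2.1
          rw [heq2] at this
          simpa using this
        exact hBin r hwt.mem_left (this ▸ hy2B)
      rw [heq2] at hch2
      obtain ⟨w, hwA2, hchA2, hwy2⟩ := dchain_split hch2 (by rw [← heq2]; exact hw2.2.1)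
        (by rw [← heq2]; exact hw2.2.2) hA2ne
      obtain ⟨lq, hwq, _, hchq⟩ := exists_dwalk hs
      have W2 : IsWalk R w t (A2.reverse ++ lt.tail) := hwA2.reverse.append hwt
      have W3 : IsWalk R w s ((A2.reverse ++ lt.tail) ++ [s]) := W2.concat (Or.inl hts)
      have W4 : IsWalk R w q (((A2.reverse ++ lt.tail) ++ [s]) ++ lq.reverse.tail) :=
        W3.append hwq.reverse
      have hout : ∀ x ∈ ((A2.reverse ++ lt.tail) ++ [s]) ++ lq.reverse.tail, x ∉ B := by
        intro x hx
        rcases List.mem_append.mp hx with hx1 | hx2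
        · rcases List.mem_append.mp hx1 with hx3 | hx4
          · rcases List.mem_append.mp hx3 with hx5 | hx6
            · exact hnone2 x (List.mem_reverse.mp hx5)
            · exact hBin x (List.mem_of_mem_tail hx6)
          · have : x = s := by simpa using hx4
            exact this ▸ (hqnotB s hs)
        · exact hqnotB x (rtg_head_of_chain hchq hwq.2.1 x
            (List.mem_reverse.mp (List.mem_of_mem_tail hx2)))
      exact no_ear_walk hacyc hB hy2B hpB hy2p W4 (Or.inr hwy2) (Or.inr hpq) hout

lemma region_closure (hacyc : ∀ v, ¬ Relation.TransGen R v v) [Fintype V]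
    (hphy : IsPhyloNet R) {B : Set V} (hB : IsBCC R B) (h3 : 3 ≤ B.ncard)
    {p q : V} (hpq : R p q) (hpB : p ∈ B) (hqB : q ∉ B)
    {S2 : Set V} (hconn : ConnOn R S2) (hdisj : ∀ x ∈ S2, x ∉ B)
    {x0 : V} (hx0 : x0 ∈ S2) (hq0 : Relation.ReflTransGen R q x0) :
    ∀ x ∈ S2, Relation.ReflTransGen R q x := by
  intro x hx
  have hwlk := hconn x0 hx0 x hx
  clear hx
  induction hwlk with
  | refl => exact hq0
  | tail hstep hUstep ih =>
    rename_i b c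
    obtain ⟨hbS, hcS, hU⟩ := hUstep
    rcases hU with h | h
    · exact ih.tail h
    · by_contra hc
      exact entry_closure hacyc hphy hB h3 hpq hpB hqB ih h hc (hdisj c hcS)

lemma blobs_disjoint (hacyc : ∀ v, ¬ Relation.TransGen R v v) [Fintype V]
    (hphy : IsPhyloNet R) {B1 B2 : Set V} (h1 : IsBCC R B1) (h31 : 3 ≤ B1.ncard)
    (h2 : IsBCC R B2) (h32 : 3 ≤ B2.ncard) (hne : B1 ≠ B2) {v : V}
    (hv1 : v ∈ B1) (hv2 : v ∈ B2) : False := by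
  obtain ⟨n1, n2, hn1B, hn2B, hn12, hUn1, hUn2⟩ := two_nbrs hacyc h1.1 h31 hv1
  obtain ⟨m1, m2, hm1B, hm2B, hm12, hUm1, hUm2⟩ := two_nbrs hacyc h2.1 h32 hv2
  have hmerge : ∀ w, w ∈ B1 → w ∈ B2 → w ≠ v → False := by
    intro w hw1 hw2 hwv
    have hbig := biconn_union h1.1 h2.1 hwv hw1 hw2 hv1 hv2
    have he1 := h1.2 _ hbig Set.subset_union_left
    have he2 := h2.2 _ hbig Set.subset_union_right
    exact hne (he1.symm.trans he2)
  have hn1m1 : n1 ≠ m1 := fun hh => hmerge n1 hn1B (hh ▸ hm1B) (Ne.symm (ne_of_U hacyc hUn1))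
  have hn1m2 : n1 ≠ m2 := fun hh => hmerge n1 hn1B (hh ▸ hm2B) (Ne.symm (ne_of_U hacyc hUn1))
  have hn2m1 : n2 ≠ m1 := fun hh => hmerge n2 hn2B (hh ▸ hm1B) (Ne.symm (ne_of_U hacyc hUn2))
  have hn2m2 : n2 ≠ m2 := fun hh => hmerge n2 hn2B (hh ▸ hm2B) (Ne.symm (ne_of_U hacyc hUn2))
  have hsub : ({n1, n2, m1, m2} : Set V) ⊆ {u | R u v} ∪ {u | R v u} := by
    rintro w (rfl | rfl | rfl | rfl)
    · rcases hUn1 with h | h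
      · exact Or.inr h
      · exact Or.inl h
    · rcases hUn2 with h | h
      · exact Or.inr h
      · exact Or.inl h
    · rcases hUm1 with h | h
      · exact Or.inr h
      · exact Or.inl h
    · rcases hUm2 with h | h
      · exact Or.inr h
      · exact Or.inl h
  have hcard4 : ({n1, n2, m1, m2} : Set V).ncard = 4 := by
    rw [Set.ncard_insert_of_notMem (by simp [hn12, hn1m1, hn1m2]) (Set.toFinite _),
      Set.ncard_insert_of_notMem (by simp [hn2m1, hn2m2]) (Set.toFinite _),
      Set.ncard_insert_of_notMem (by simp [hm12]) (Set.toFinite _), Set.ncard_singleton]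
  have hle := Set.ncard_le_ncard hsub (Set.toFinite _)
  have hle2 := Set.ncard_union_le {u | R u v} {u | R v u}
  have hdeg : inDeg R v + outDeg R v ≤ 3 := by
    rcases hphy.2.2 v with ⟨ha, hb⟩ | ⟨ha, hb⟩ | ⟨ha, hb⟩ | ⟨ha, hb⟩ <;> omega
  unfold inDeg outDeg at hdeg
  omega

end PhyloProof
namespace PhyloProof
open Phylo Relation List

variable {V : Type*} {R : V → V → Prop}

/-- The set of arcs leaving `S`. -/
def OutA (R : V → V → Prop) (S : Set V) : Set (V × V) :=
  {p : V × V | R p.1 p.2 ∧ p.1 ∈ S ∧ p.2 ∉ S}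

lemma outA_three [Fintype V] (hgood : GoodNet R) {B : Set V} (hB : IsBCC R B)
    (h3 : 3 ≤ B.ncard) : 3 ≤ (OutA R B).ncard := hgood.2 B hB h3

lemma two_tails [Fintype V] (hphy : IsPhyloNet R) {B : Set V}
    (h3 : 3 ≤ (OutA R B).ncard) :
    ∃ e1 e2 : V × V, e1 ∈ OutA R B ∧ e2 ∈ OutA R B ∧ e1.1 ≠ e2.1 := by
  by_contra hcon
  push_neg at hcon
  have hne : (OutA R B).Nonempty := by
    apply Set.nonempty_of_ncard_ne_zero
    omega
  obtain ⟨e0, he0⟩ := hne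
  have hsub : OutA R B ⊆ (fun w => (e0.1, w)) '' {w | R e0.1 w} := by
    intro e he
    have h1 : e.1 = e0.1 := hcon e e0 he he0
    exact ⟨e.2, by rw [← h1]; exact he.1, by rw [← h1]⟩
  have hle := Set.ncard_le_ncard hsub (Set.toFinite _)
  have hle2 := Set.ncard_image_le (f := fun w => (e0.1, w)) (s := {w | R e0.1 w})
    (Set.toFinite _)
  have hod := outDeg_le_two hphy e0.1
  unfold outDeg at hod
  omega

/-- Cross-blob contradiction: if a leaf is below outgoing arcs of two different
blobs, then some relation between the blobs must hold. -/
lemma cross_blob (hacyc : ∀ v, ¬ Relation.TransGen R v v) [Fintype V]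
    (hphy : IsPhyloNet R) {B1 : Set V} (hB1 : IsBCC R B1) (h31 : 3 ≤ B1.ncard)
    {p1 q1 : V} (he1 : (p1, q1) ∈ OutA R B1)
    {p2 q2 : V} (hp2B1 : p2 ∉ B1) (hq2R : R p2 q2)
    (ha : ∀ x ∈ B1, ¬ Relation.ReflTransGen R q2 x)
    (hb : ∀ p q, R p q → p ∈ B1 → q ∉ B1 → ¬ Relation.ReflTransGen R q p2)
    {ℓ : V} (hl1 : Relation.ReflTransGen R q1 ℓ) (hl2 : Relation.ReflTransGen R q2 ℓ) :
    False := by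
  obtain ⟨hpq1, hp1B, hq1B⟩ := he1
  obtain ⟨r, hr0, hru⟩ := root_spec hphy
  have hreach := root_reaches hacyc hru
  have hq1notB : ∀ x, Relation.ReflTransGen R q1 x → x ∉ B1 := by
    intro x hqx hxB
    exact reach_out_disjoint hacyc hB1 hpq1 hp1B hq1B hxB hqx
  obtain ⟨lp, hwp, hndp, hchp⟩ := exists_dwalk (hreach p2)
  by_cases hBin : ∃ y ∈ lp, y ∈ B1
  · obtain ⟨y, hylp, hyB⟩ := hBin
    have hyp2 : Relation.ReflTransGen R y p2 := rtg_last_of_chain hchp hwp.2.2 y hylp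
    obtain ⟨p'', q'', hR'', hp''B, hq''B, hq''p2⟩ := exit_arc hyB hp2B1 hyp2
    exact hb p'' q'' hR'' hp''B hq''B hq''p2
  · push_neg at hBin
    obtain ⟨tp, htpB, htpp⟩ := tail_parent hacyc hphy hB1.1 h31 hp1B hpq1 hq1B
    obtain ⟨l2, hw2, hnd2, hch2⟩ := exists_dwalk (hreach tp)
    have hin2 : ∃ y ∈ l2, y ∈ B1 := ⟨tp, hw2.mem_right, htpB⟩
    obtain ⟨A2, y2, C2, heq2, hy2B, hnone2⟩ := exists_first_split hin2
    by_cases hy2p : y2 = p1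
    · subst hy2p
      have hptp : Relation.ReflTransGen R y2 tp :=
        rtg_last_of_chain hch2 hw2.2.2 y2 (by rw [heq2]; simp)
      have htpy2 : tp ≠ y2 := ne_of_R hacyc htpp
      exact hacyc y2 ((transGen_of_rtg hacyc hptp (fun hh => htpy2 hh.symm)).tail htpp)
    · have hA2ne : A2 ≠ [] := by
        rintro rfl
        have : y2 = r := by
          have := hw2.2.1
          rw [heq2] at this
          simpa using this
        exact hBin r hwp.mem_left (this ▸ hy2B)
      rw [heq2] at hch2
      obtain ⟨w, hwA2, hchA2, hwy2⟩ := dchain_split hch2 (by rw [← heq2]; exact hw2.2.1)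
        (by rw [← heq2]; exact hw2.2.2) hA2ne
      obtain ⟨lq2, hwq2, _, hchq2⟩ := exists_dwalk hl2
      obtain ⟨lq1, hwq1, _, hchq1⟩ := exists_dwalk hl1
      have W2 : IsWalk R w p2 (A2.reverse ++ lp.tail) := hwA2.reverse.append hwp
      have W3 : IsWalk R w q2 ((A2.reverse ++ lp.tail) ++ [q2]) := W2.concat (Or.inl hq2R)
      have W4 : IsWalk R w ℓ (((A2.reverse ++ lp.tail) ++ [q2]) ++ lq2.tail) :=
        W3.append hwq2
      have W5 : IsWalk R w q1
          ((((A2.reverse ++ lp.tail) ++ [q2]) ++ lq2.tail) ++ lq1.reverse.tail) :=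
        W4.append hwq1.reverse
      have hout : ∀ x ∈ (((A2.reverse ++ lp.tail) ++ [q2]) ++ lq2.tail) ++ lq1.reverse.tail,
          x ∉ B1 := by
        intro x hx
        rcases List.mem_append.mp hx with hx1 | hx2
        · rcases List.mem_append.mp hx1 with hx3 | hx4
          · rcases List.mem_append.mp hx3 with hx5 | hx6
            · rcases List.mem_append.mp hx5 with hx7 | hx8
              · exact hnone2 x (List.mem_reverse.mp hx7)
              · exact hBin x (List.mem_of_mem_tail hx8)
            · have : x = q2 := by simpa using hx6
              subst this
              exact fun hxB => ha x hxB Relation.ReflTransGen.refl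
          · exact fun hxB => ha x hxB
              (rtg_head_of_chain hchq2 hwq2.2.1 x (List.mem_of_mem_tail hx4))
        · exact hq1notB x (rtg_head_of_chain hchq1 hwq1.2.1 x
            (List.mem_reverse.mp (List.mem_of_mem_tail hx2)))
      exact no_ear_walk hacyc hB1 hy2B hp1B hy2p W5 (Or.inr hwy2) (Or.inr hpq1) hout

/-- If two distinct blobs both have a common leaf below them, one blob is entirely
below an outgoing arc of the other. -/
lemma nested_blobs (hacyc : ∀ v, ¬ Relation.TransGen R v v) [Fintype V]
    (hphy : IsPhyloNet R) {B1 B2 : Set V} (hB1 : IsBCC R B1) (h31 : 3 ≤ B1.ncard)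
    (hB2 : IsBCC R B2) (h32 : 3 ≤ B2.ncard) (hne : B1 ≠ B2)
    {p1 q1 p2 q2 ℓ : V} (he1 : (p1, q1) ∈ OutA R B1) (he2 : (p2, q2) ∈ OutA R B2)
    (hl1 : Relation.ReflTransGen R q1 ℓ) (hl2 : Relation.ReflTransGen R q2 ℓ) :
    (∃ e ∈ OutA R B1, ∀ x ∈ B2, Relation.ReflTransGen R e.2 x) ∨
    (∃ e ∈ OutA R B2, ∀ x ∈ B1, Relation.ReflTransGen R e.2 x) := by
  have hdisj : ∀ v, v ∈ B1 → v ∈ B2 → False :=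
    fun v h1 h2 => blobs_disjoint hacyc hphy hB1 h31 hB2 h32 hne h1 h2
  by_cases hcase : ∃ x ∈ B1, Relation.ReflTransGen R q2 x
  · right
    obtain ⟨x0, hx0B, hx0r⟩ := hcase
    refine ⟨(p2, q2), he2, ?_⟩
    exact region_closure hacyc hphy hB2 h32 he2.1 he2.2.1 he2.2.2 hB1.1.2.1
      (fun x hx hx2 => hdisj x hx hx2) hx0B hx0r
  · by_cases hdown : ∃ e ∈ OutA R B1, Relation.ReflTransGen R e.2 p2
    · left
      obtain ⟨e, heO, her⟩ := hdown
      refine ⟨e, heO, ?_⟩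
      exact region_closure hacyc hphy hB1 h31 heO.1 heO.2.1 heO.2.2 hB2.1.2.1
        (fun x hx hx1 => hdisj x hx1 hx) he2.2.1 her
    · exfalso
      push_neg at hcase hdown
      refine cross_blob hacyc hphy hB1 h31 he1 (fun hh => hdisj p2 hh he2.2.1)
        he2.1 hcase ?_ hl1 hl2
      intro p q hpq hpB hqB hqp2
      exact hdown (p, q) ⟨hpq, hpB, hqB⟩ hqp2

end PhyloProof
namespace PhyloProof
open Phylo Relation List

variable {V : Type*} {R : V → V → Prop}

/-- The leaves hanging below outgoing arcs of `B`. -/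
def Lam (R : V → V → Prop) (B : Set V) : Set V :=
  {x | IsLf R x ∧ ∃ e ∈ OutA R B, Relation.ReflTransGen R e.2 x}

lemma blob_data [Fintype V] [LinearOrder V] (hphy : IsPhyloNet R) (hgood : GoodNet R)
    {B : Set V} (hB : IsBCC R B) (h3 : 3 ≤ B.ncard) :
    ∃ p0 phi mu : V,
      phi ∈ Lam R B ∧
      (∀ e ∈ OutA R B, e.1 = p0 → ¬ Relation.ReflTransGen R e.2 phi) ∧
      (mu ∈ Lam R B ∧ ∀ x ∈ Lam R B, mu ≤ x) ∧
      (∀ e ∈ OutA R B, Relation.ReflTransGen R e.2 mu → e.1 = p0) ∧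
      (∀ x ∈ Lam R B, (∀ e ∈ OutA R B, e.1 = p0 → ¬ Relation.ReflTransGen R e.2 x) →
        phi ≤ x) := by
  have hacyc := hphy.1
  have h3' := outA_three hgood hB h3
  have hLne : (Lam R B).Nonempty := by
    have : (OutA R B).Nonempty := Set.nonempty_of_ncard_ne_zero (by omega)
    obtain ⟨e, he⟩ := this
    obtain ⟨ℓ, hlf, hrtg⟩ := exists_leaf_below hacyc e.2
    exact ⟨ℓ, hlf, e, he, hrtg⟩
  have hLfin := Set.toFinite (Lam R B)
  have hLne' : hLfin.toFinset.Nonempty := by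
    rwa [Set.Finite.toFinset_nonempty]
  set mu := hLfin.toFinset.min' hLne' with hmu_def
  have hmuL : mu ∈ Lam R B := hLfin.mem_toFinset.mp (hLfin.toFinset.min'_mem hLne')
  have hmumin : ∀ x ∈ Lam R B, mu ≤ x := fun x hx =>
    hLfin.toFinset.min'_le x (hLfin.mem_toFinset.mpr hx)
  obtain ⟨hmulf, emu, hemuO, hemur⟩ := hmuL
  set p0 := emu.1 with hp0_def
  have hQ4 : ∀ e ∈ OutA R B, Relation.ReflTransGen R e.2 mu → e.1 = p0 := by
    intro e heO her
    by_contra hne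
    exact reach_reach_disjoint hacyc hB heO.1 heO.2.1 heO.2.2 hemuO.1 hemuO.2.1
      hemuO.2.2 hne her hemur
  -- the set of valid leaves
  set K := {x ∈ Lam R B | ∀ e ∈ OutA R B, e.1 = p0 → ¬ Relation.ReflTransGen R e.2 x}
    with hK_def
  have hKne : K.Nonempty := by
    obtain ⟨e1, e2, he1, he2, hne12⟩ := two_tails hphy h3'
    have hsome : ∃ e' ∈ OutA R B, e'.1 ≠ p0 := by
      rcases eq_or_ne e1.1 p0 with h | h
      · exact ⟨e2, he2, by rw [← h]; exact hne12.symm⟩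
      · exact ⟨e1, he1, h⟩
    obtain ⟨e', he'O, he'p0⟩ := hsome
    obtain ⟨ℓ', hlf', hrtg'⟩ := exists_leaf_below hacyc e'.2
    refine ⟨ℓ', ⟨hlf', e', he'O, hrtg'⟩, ?_⟩
    intro e heO hep0 her
    exact reach_reach_disjoint hacyc hB heO.1 heO.2.1 heO.2.2 he'O.1 he'O.2.1 he'O.2.2
      (by rw [hep0]; exact fun hh => he'p0 hh.symm) her hrtg'
  have hKfin := Set.toFinite K
  have hKne' : hKfin.toFinset.Nonempty := by rwa [Set.Finite.toFinset_nonempty]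
  set phi := hKfin.toFinset.min' hKne' with hphi_def
  have hphiK : phi ∈ K := hKfin.mem_toFinset.mp (hKfin.toFinset.min'_mem hKne')
  refine ⟨p0, phi, mu, hphiK.1, hphiK.2, ⟨⟨hmulf, emu, hemuO, hemur⟩, hmumin⟩, hQ4, ?_⟩
  intro x hxL hxprop
  exact hKfin.toFinset.min'_le x (hKfin.mem_toFinset.mpr ⟨hxL, hxprop⟩)

/-- The chase in the nested case. -/
lemma nested_case [Fintype V] [LinearOrder V] (hphy : IsPhyloNet R)
    {B1 B2 : Set V} (hB1 : IsBCC R B1)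
    {p01 phi1 : V}
    (hQ2₁ : ∀ e ∈ OutA R B1, e.1 = p01 → ¬ Relation.ReflTransGen R e.2 phi1)
    (hQ5₁ : ∀ x ∈ Lam R B1, (∀ e ∈ OutA R B1, e.1 = p01 →
      ¬ Relation.ReflTransGen R e.2 x) → phi1 ≤ x)
    {p02 phi2 mu2 : V}
    (hQ1₂ : phi2 ∈ Lam R B2)
    (hQ2₂ : ∀ e ∈ OutA R B2, e.1 = p02 → ¬ Relation.ReflTransGen R e.2 phi2)
    (hQ3₂ : mu2 ∈ Lam R B2 ∧ ∀ x ∈ Lam R B2, mu2 ≤ x)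
    (hQ4₂ : ∀ e ∈ OutA R B2, Relation.ReflTransGen R e.2 mu2 → e.1 = p02)
    {e : V × V} (heO : e ∈ OutA R B1) (hall : ∀ x ∈ B2, Relation.ReflTransGen R e.2 x)
    (heq : phi1 = phi2) : False := by
  have hacyc := hphy.1
  have hsub : ∀ x ∈ Lam R B2, Relation.ReflTransGen R e.2 x := by
    rintro x ⟨hlf, e', he'O, hrtg⟩
    exact ((hall e'.1 he'O.2.1).tail he'O.1).trans hrtg
  have hrphi1 : Relation.ReflTransGen R e.2 phi1 := by
    rw [heq]
    exact hsub phi2 hQ1₂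
  rcases eq_or_ne e.1 p01 with hp | hp
  · exact hQ2₁ e heO hp hrphi1
  · have hmu2lf : IsLf R mu2 := hQ3₂.1.1
    have hmu2L1 : mu2 ∈ Lam R B1 := ⟨hmu2lf, e, heO, hsub mu2 hQ3₂.1⟩
    have hmu2notrem : ∀ e'' ∈ OutA R B1, e''.1 = p01 →
        ¬ Relation.ReflTransGen R e''.2 mu2 := by
      intro e'' he''O he''p0 her
      exact reach_reach_disjoint hacyc hB1 he''O.1 he''O.2.1 he''O.2.2 heO.1 heO.2.1
        heO.2.2 (by rw [he''p0]; exact hp.symm) her (hsub mu2 hQ3₂.1)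
    have h1 : phi1 ≤ mu2 := hQ5₁ mu2 hmu2L1 hmu2notrem
    have h2 : mu2 ≤ phi2 := hQ3₂.2 phi2 hQ1₂
    have heq2 : mu2 = phi2 := le_antisymm h2 (heq ▸ h1)
    obtain ⟨_, ew, hewO, hewr⟩ := hQ3₂.1
    have hewp0 : ew.1 = p02 := hQ4₂ ew hewO hewr
    exact hQ2₂ ew hewO hewp0 (heq2 ▸ hewr)

lemma phi_inj [Fintype V] [LinearOrder V] (hphy : IsPhyloNet R) (hgood : GoodNet R)
    {B1 B2 : Set V} (hB1 : IsBCC R B1) (h31 : 3 ≤ B1.ncard)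
    (hB2 : IsBCC R B2) (h32 : 3 ≤ B2.ncard) (hne : B1 ≠ B2)
    {p01 phi1 mu1 : V} {p02 phi2 mu2 : V}
    (hd1 : phi1 ∈ Lam R B1 ∧
      (∀ e ∈ OutA R B1, e.1 = p01 → ¬ Relation.ReflTransGen R e.2 phi1) ∧
      (mu1 ∈ Lam R B1 ∧ ∀ x ∈ Lam R B1, mu1 ≤ x) ∧
      (∀ e ∈ OutA R B1, Relation.ReflTransGen R e.2 mu1 → e.1 = p01) ∧
      (∀ x ∈ Lam R B1, (∀ e ∈ OutA R B1, e.1 = p01 →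
        ¬ Relation.ReflTransGen R e.2 x) → phi1 ≤ x))
    (hd2 : phi2 ∈ Lam R B2 ∧
      (∀ e ∈ OutA R B2, e.1 = p02 → ¬ Relation.ReflTransGen R e.2 phi2) ∧
      (mu2 ∈ Lam R B2 ∧ ∀ x ∈ Lam R B2, mu2 ≤ x) ∧
      (∀ e ∈ OutA R B2, Relation.ReflTransGen R e.2 mu2 → e.1 = p02) ∧
      (∀ x ∈ Lam R B2, (∀ e ∈ OutA R B2, e.1 = p02 →
        ¬ Relation.ReflTransGen R e.2 x) → phi2 ≤ x))
    (heq : phi1 = phi2) : False := by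
  have hacyc := hphy.1
  obtain ⟨hQ1₁, hQ2₁, hQ3₁, hQ4₁, hQ5₁⟩ := hd1
  obtain ⟨hQ1₂, hQ2₂, hQ3₂, hQ4₂, hQ5₂⟩ := hd2
  obtain ⟨hlf1, e1, he1O, he1r⟩ := id hQ1₁
  obtain ⟨hlf2, e2, he2O, he2r⟩ := id hQ1₂
  have he2r' : Relation.ReflTransGen R e2.2 phi1 := heq ▸ he2r
  have := nested_blobs hacyc hphy hB1 h31 hB2 h32 hne
    (show (e1.1, e1.2) ∈ OutA R B1 from he1O) (show (e2.1, e2.2) ∈ OutA R B2 from he2O)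
    he1r he2r'
  rcases this with ⟨e, heO, hall⟩ | ⟨e, heO, hall⟩
  · exact nested_case hphy hB1 hQ2₁ hQ5₁ hQ1₂ hQ2₂ hQ3₂ hQ4₂ heO hall heq
  · exact nested_case hphy hB2 hQ2₂ hQ5₂ hQ1₁ hQ2₁ hQ3₁ hQ4₁ heO hall heq.symm

/-- The number of recombination vertices is at most twice the number of leaves. -/
lemma recomb_card_le [Fintype V] (hgood : GoodNet R) (hlev : LevelK 2 R) :
    {v | inDeg R v = 2}.ncard ≤ 2 * (netLeaves R).ncard := by
  classical
  rcases isEmpty_or_nonempty V with hV | hV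
  · have : {v | inDeg R v = 2} = ∅ := Set.eq_empty_of_isEmpty _
    simp [this]
  have hphy := hgood.1
  have hacyc := hphy.1
  letI : LinearOrder V := LinearOrder.lift' (Fintype.equivFin V) (Equiv.injective _)
  have hblob : ∀ v, inDeg R v = 2 → ∃ B, IsBCC R B ∧ v ∈ B ∧ 3 ≤ B.ncard :=
    fun v hv => recomb_in_blob hphy hv
  choose! β hβ1 hβ2 hβ3 using hblob
  have hdata : ∀ B : Set V, IsBCC R B → 3 ≤ B.ncard → ∃ p0 phi mu : V,
      phi ∈ Lam R B ∧
      (∀ e ∈ OutA R B, e.1 = p0 → ¬ Relation.ReflTransGen R e.2 phi) ∧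
      (mu ∈ Lam R B ∧ ∀ x ∈ Lam R B, mu ≤ x) ∧
      (∀ e ∈ OutA R B, Relation.ReflTransGen R e.2 mu → e.1 = p0) ∧
      (∀ x ∈ Lam R B, (∀ e ∈ OutA R B, e.1 = p0 → ¬ Relation.ReflTransGen R e.2 x) →
        phi ≤ x) :=
    fun B hB h3 => blob_data hphy hgood hB h3
  choose! p0f phif muf hdataspec using hdata
  set g : V → V := fun v => phif (β v) with hg_def
  set F : Finset V := Finset.univ.filter (fun v => inDeg R v = 2) with hF_def
  have hmemF : ∀ v, v ∈ F ↔ inDeg R v = 2 := by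
    intro v; simp [hF_def]
  set LF : Finset V := Finset.univ.filter (fun v => IsLf R v) with hLF_def
  have hcard1 : {v | inDeg R v = 2}.ncard = F.card := by
    rw [Set.ncard_eq_toFinset_card']
    congr 1
    ext v
    simp [hF_def]
  have hcard2 : (netLeaves R).ncard = LF.card := by
    rw [Set.ncard_eq_toFinset_card']
    congr 1
    ext v
    simp [hLF_def, netLeaves]
    exact Set.mem_toFinset
  rw [hcard1, hcard2]
  have hstep1 : F.card ≤ 2 * (F.image g).card := by
    apply Finset.card_le_mul_card_image
    intro a ha
    obtain ⟨v0, hv0F, hv0g⟩ := Finset.mem_image.mp ha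
    have hv0 : inDeg R v0 = 2 := (hmemF v0).mp hv0F
    set B0 := β v0 with hB0_def
    have hsubfil : F.filter (fun x => g x = a) ⊆
        (Set.toFinite {u ∈ B0 | inDeg R u = 2}).toFinset := by
      intro v hv
      obtain ⟨hvF, hvg⟩ := Finset.mem_filter.mp hv
      have hv2 : inDeg R v = 2 := (hmemF v).mp hvF
      have hBeq : β v = B0 := by
        by_contra hne
        exact phi_inj hphy hgood (hβ1 v hv2) (hβ3 v hv2) (hβ1 v0 hv0) (hβ3 v0 hv0) hne
          (hdataspec (β v) (hβ1 v hv2) (hβ3 v hv2))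
          (hdataspec B0 (hβ1 v0 hv0) (hβ3 v0 hv0))
          (show phif (β v) = phif (β v0) by
            have h1 : g v = g v0 := by rw [hvg, hv0g]
            simpa only [hg_def] using h1)
      rw [Set.Finite.mem_toFinset]
      exact ⟨hBeq ▸ hβ2 v hv2, hv2⟩
    calc (F.filter (fun x => g x = a)).card
        ≤ (Set.toFinite {u ∈ B0 | inDeg R u = 2}).toFinset.card :=
          Finset.card_le_card hsubfil
      _ = {u ∈ B0 | inDeg R u = 2}.ncard := (Set.ncard_eq_toFinset_card _ _).symm
      _ ≤ 2 := hlev B0 (hβ1 v0 hv0)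
  have hstep2 : (F.image g).card ≤ LF.card := by
    apply Finset.card_le_card
    intro a ha
    obtain ⟨v, hvF, hvg⟩ := Finset.mem_image.mp ha
    have hv2 : inDeg R v = 2 := (hmemF v).mp hvF
    have hphiL : phif (β v) ∈ Lam R (β v) :=
      (hdataspec (β v) (hβ1 v hv2) (hβ3 v hv2)).1
    have hlf : IsLf R (g v) := by
      simp only [hg_def]
      exact hphiL.1
    rw [hvg] at hlf
    rw [hLF_def]
    simp only [Finset.mem_filter, Finset.mem_univ, true_and]
    exact hlf
  omega

end PhyloProof
namespace PhyloProof
open Phylo Relation List Finset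

variable {V : Type*} {R : V → V → Prop}

lemma arcs_eq [Fintype V] (hphy : IsPhyloNet R) :
    {p : V × V | R p.1 p.2}.ncard + 2 =
      3 * {v | inDeg R v = 2}.ncard + 2 * (netLeaves R).ncard := by
  classical
  set EF : Finset (V × V) := Finset.univ.filter (fun p : V × V => R p.1 p.2) with hEF_def
  have hE1 : {p : V × V | R p.1 p.2}.ncard = EF.card := by
    rw [Set.ncard_eq_toFinset_card', Set.toFinset_setOf]
  have houtv : ∀ v, outDeg R v = (Finset.univ.filter fun w => R v w).card := by
    intro v
    rw [outDeg, Set.ncard_eq_toFinset_card', Set.toFinset_setOf]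
  have hinv : ∀ v, inDeg R v = (Finset.univ.filter fun u => R u v).card := by
    intro v
    rw [inDeg, Set.ncard_eq_toFinset_card', Set.toFinset_setOf]
  have hout : EF.card = ∑ v, outDeg R v := by
    rw [Finset.card_eq_sum_card_fiberwise (f := Prod.fst) (t := Finset.univ)
      (fun x _ => Finset.mem_univ _)]
    refine Finset.sum_congr rfl (fun v _ => ?_)
    rw [houtv]
    apply Finset.card_bij (fun p _ => p.2)
    · intro p hp
      simp only [hEF_def, Finset.mem_filter, Finset.mem_univ, true_and] at hp
      simp only [Finset.mem_filter, Finset.mem_univ, true_and]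
      rw [← hp.2]
      exact hp.1
    · intro p hp p' hp' hpp
      simp only [hEF_def, Finset.mem_filter, Finset.mem_univ, true_and] at hp hp'
      exact Prod.ext (hp.2.trans hp'.2.symm) hpp
    · intro w hw
      simp only [Finset.mem_filter, Finset.mem_univ, true_and] at hw
      exact ⟨(v, w), by simp [hEF_def, hw], rfl⟩
  have hin : EF.card = ∑ v, inDeg R v := by
    rw [Finset.card_eq_sum_card_fiberwise (f := Prod.snd) (t := Finset.univ)
      (fun x _ => Finset.mem_univ _)]
    refine Finset.sum_congr rfl (fun v _ => ?_)
    rw [hinv]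
    apply Finset.card_bij (fun p _ => p.1)
    · intro p hp
      simp only [hEF_def, Finset.mem_filter, Finset.mem_univ, true_and] at hp
      simp only [Finset.mem_filter, Finset.mem_univ, true_and]
      rw [← hp.2]
      exact hp.1
    · intro p hp p' hp' hpp
      simp only [hEF_def, Finset.mem_filter, Finset.mem_univ, true_and] at hp hp'
      exact Prod.ext hpp (hp.2.trans hp'.2.symm)
    · intro u hu
      simp only [Finset.mem_filter, Finset.mem_univ, true_and] at hu
      exact ⟨(u, v), by simp [hEF_def, hu], rfl⟩
  obtain ⟨r, hr0, hru⟩ := root_spec hphy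
  have ha : (Finset.univ.filter (fun v => inDeg R v = 0)).card = 1 := by
    rw [Finset.card_eq_one]
    refine ⟨r, ?_⟩
    ext v
    simp only [Finset.mem_filter, Finset.mem_univ, true_and, Finset.mem_singleton]
    constructor
    · exact fun h => hru v h
    · rintro rfl; exact hr0
  have hper : ∀ v, 3 * (if inDeg R v = 2 then 1 else 0) +
      2 * (if outDeg R v = 0 then 1 else 0) + outDeg R v =
      2 * inDeg R v + 2 * (if inDeg R v = 0 then 1 else 0) := by
    intro v
    rcases hphy.2.2 v with ⟨h1, h2⟩ | ⟨h1, h2⟩ | ⟨h1, h2⟩ | ⟨h1, h2⟩ <;>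
      rw [h1, h2] <;> norm_num
  have hsum := Finset.sum_congr rfl (fun v (_ : v ∈ Finset.univ) => hper v)
  have e1 : ∑ v, (3 * (if inDeg R v = 2 then 1 else 0) +
      2 * (if outDeg R v = 0 then 1 else 0) + outDeg R v) =
      3 * (Finset.univ.filter (fun v => inDeg R v = 2)).card +
      2 * (Finset.univ.filter (fun v => outDeg R v = 0)).card + ∑ v, outDeg R v := by
    rw [Finset.sum_add_distrib, Finset.sum_add_distrib, Finset.card_filter,
      Finset.card_filter, Finset.mul_sum, Finset.mul_sum]
  have e2 : ∑ v, (2 * inDeg R v + 2 * (if inDeg R v = 0 then 1 else 0)) =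
      2 * ∑ v, inDeg R v + 2 * (Finset.univ.filter (fun v => inDeg R v = 0)).card := by
    rw [Finset.sum_add_distrib, Finset.card_filter, Finset.mul_sum, Finset.mul_sum]
  rw [e1, e2] at hsum
  have hc : {v | inDeg R v = 2}.ncard =
      (Finset.univ.filter (fun v => inDeg R v = 2)).card := by
    rw [Set.ncard_eq_toFinset_card', Set.toFinset_setOf]
  have hl : (netLeaves R).ncard =
      (Finset.univ.filter (fun v => outDeg R v = 0)).card := by
    rw [Set.ncard_eq_toFinset_card']
    congr 1
    ext v
    rw [Set.mem_toFinset]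
    simp [netLeaves, IsLf]
  rw [hE1, hc, hl]
  rw [ha] at hsum
  omega

end PhyloProof
open Phylo in
/-- Any level-2 phylogenetic network with `n` leaves has at most `8n`
arcs. -/
theorem stmt10 {V : Type*} [Fintype V] (R : V → V → Prop)
    (hgood : GoodNet R) (hlev : LevelK 2 R) :
    {p : V × V | R p.1 p.2}.ncard ≤ 8 * (netLeaves R).ncard := by
  have h1 := PhyloProof.arcs_eq hgood.1
  have h2 := PhyloProof.recomb_card_le hgood hlev
  omega
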